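/- The increment Δ(s) = (1/n²)·[(n-2s+2)(v_1 - v_{n+2-s}) - Σ_{i=n+3-s}^{n}(v_{n+2-s} - v_i)] is nonincreasing in s for s ∈ {2,…,n}, i.e. Δ(s+1) ≤ Δ(s) for 2 ≤ s ≤ n-1. -/

import Mathlib

open Finset

/-- The increment of maximal coalition gains, in its explicit form. -/
noncomputable def Delta (n : ℕ) (v : ℕ → ℝ) (s : ℕ) : ℝ :=
  1 / (n : ℝ) ^ 2 *
    (((n : ℝ) - 2 * s + 2) * (v 1 - v (n + 2 - s))
      - ∑ i ∈ Finset.Icc (n + 3 - s) n, (v (n + 2 - s) - v i))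

theorem increment_nonincreasing (n : ℕ) (v : ℕ → ℝ)
    (hv : ∀ i j, i ≤ j → v j ≤ v i)
    (s : ℕ) (hs : 2 ≤ s) (hsn : s ≤ n - 1) :
    Delta n v (s + 1) ≤ Delta n v s := by
  obtain ⟨m, rfl⟩ : ∃ m, n = s + 1 + m := ⟨n - (s + 1), by omega⟩
  unfold Delta
  have e1 : s + 1 + m + 2 - (s + 1) = m + 2 := by omega
  have e2 : s + 1 + m + 3 - (s + 1) = m + 3 := by omega
  have e3 : s + 1 + m + 2 - s = m + 3 := by omega
  have e4 : s + 1 + m + 3 - s = m + 4 := by omega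
  rw [e1, e2, e3, e4]
  have hsplit : Finset.Icc (m + 3) (s + 1 + m) =
      insert (m + 3) (Finset.Icc (m + 4) (s + 1 + m)) := by
    ext x
    simp only [Finset.mem_Icc, Finset.mem_insert]
    omega
  rw [hsplit, Finset.sum_insert (by simp)]
  have ec : s + 1 + m + 1 - (m + 4) = s - 2 := by omega
  simp only [Finset.sum_sub_distrib, Finset.sum_const, Nat.card_Icc, nsmul_eq_mul, ec]
  have hc : ((s - 2 : ℕ) : ℝ) = (s : ℝ) - 2 := by
    have : (2 : ℕ) ≤ s := hs
    push_cast [Nat.cast_sub this]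
    ring
  rw [hc]
  have hab : v (m + 3) ≤ v (m + 2) := hv _ _ (by omega)
  have hb1 : v (m + 3) ≤ v 1 := hv _ _ (by omega)
  have hm : (0 : ℝ) ≤ (m : ℝ) := by positivity
  have hpos : (0 : ℝ) ≤ 1 / ((s + 1 + m : ℕ) : ℝ) ^ 2 := by positivity
  apply mul_le_mul_of_nonneg_left _ hpos
  push_cast
  nlinarith [mul_nonneg hm (sub_nonneg.2 hab)]
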